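/- For every n ≥ 1 and x, y ∈ I with x ≤ y, the n-fold product W^{⊗n}(x,y) satisfies W^{⊗n}(x,y) ≤ W(x,y) · (∫_{(x,y)} W(x,u) m(du))^{n-1} / (n-1)!. -/

import Mathlib

open MeasureTheory Set Filter
open scoped ENNReal NNReal


open MeasureTheory Set Filter

noncomputable def otimes (m : Measure ℝ) (f g : ℝ → ℝ → ℝ) : ℝ → ℝ → ℝ :=
  fun x y => ∫ u in Set.Ioo x y, f x u * g u y ∂m

/-- `iterW m W n = W^{⊗(n+1)}` -/
noncomputable def iterW (m : Measure ℝ) (W : ℝ → ℝ → ℝ) : ℕ → ℝ → ℝ → ℝ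
  | 0 => W
  | n + 1 => otimes m W (iterW m W n)

/-- Analytic extension `M^{(q)}(x,y) = Σ_{n≥0} q^n W^{⊗(n+1)}(x,y)` for complex `q`. -/
noncomputable def Mq (m : Measure ℝ) (W : ℝ → ℝ → ℝ) (q : ℂ) (x y : ℝ) : ℂ :=
  ∑' n : ℕ, q ^ n * ((iterW m W n x y : ℝ) : ℂ)

/-- Real version of `M^{(q)}`. -/
noncomputable def Mr (m : Measure ℝ) (W : ℝ → ℝ → ℝ) (q : ℝ) (x y : ℝ) : ℝ :=
  ∑' n : ℕ, q ^ n * iterW m W n x y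

/-- `Z^{(q)}(x,y) = 1 + Σ_{n≥0} q^{n+1} ∫_{(x,y)} W^{⊗(n+1)}(x,u) m(du)`. -/
noncomputable def Zq (m : Measure ℝ) (W : ℝ → ℝ → ℝ) (q : ℂ) (x y : ℝ) : ℂ :=
  1 + ∑' n : ℕ, q ^ (n + 1) * ((∫ u in Set.Ioo x y, iterW m W n x u ∂m : ℝ) : ℂ)


lemma tail_bound (μ : Measure ℝ) [IsFiniteMeasure μ] (s : ℝ) (hs : 0 ≤ s) :
    μ {u | s < (μ (Set.Ioi u)).toReal} ≤ ENNReal.ofReal ((μ Set.univ).toReal - s) := by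
  set c := (μ Set.univ).toReal with hc
  set A := {u : ℝ | s < (μ (Set.Ioi u)).toReal} with hA
  have hlow : ∀ u ∈ A, ∀ v, v ≤ u → v ∈ A := by
    intro u hu v hv
    have h1 : μ (Set.Ioi u) ≤ μ (Set.Ioi v) := measure_mono (Set.Ioi_subset_Ioi hv)
    have h2 : (μ (Set.Ioi u)).toReal ≤ (μ (Set.Ioi v)).toReal :=
      ENNReal.toReal_le_toReal (measure_ne_top μ _) (measure_ne_top μ _) |>.mpr h1
    exact lt_of_lt_of_le hu h2
  have hpt : ∀ u ∈ A, μ (Set.Iic u) ≤ ENNReal.ofReal (c - s) := by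
    intro u hu
    have h1 : μ (Set.Iic u) = μ Set.univ - μ (Set.Ioi u) := by
      rw [show Set.Iic u = (Set.Ioi u)ᶜ from Set.compl_Ioi.symm]
      exact measure_compl measurableSet_Ioi (measure_ne_top μ _)
    have h2 : ENNReal.ofReal s ≤ μ (Set.Ioi u) :=
      le_trans (ENNReal.ofReal_le_ofReal (le_of_lt hu))
        (le_of_eq (ENNReal.ofReal_toReal (measure_ne_top μ _)))
    rw [h1, ENNReal.ofReal_sub _ hs, ← ENNReal.ofReal_toReal (measure_ne_top μ Set.univ)]
    exact tsub_le_tsub le_rfl h2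
  rcases Set.eq_empty_or_nonempty A with hAe | hAne
  · rw [hAe]; simp
  by_cases hbdd : BddAbove A
  · set a := sSup A with ha
    by_cases haA : a ∈ A
    · exact le_trans (measure_mono (fun u hu => le_csSup hbdd hu)) (hpt a haA)
    · -- A ⊆ Iio a = ⋃ Iic (a - 1/(k+1))
      have hsub : A ⊆ Set.Iio a := by
        intro u hu
        rcases lt_or_eq_of_le (le_csSup hbdd hu) with h | h
        · exact h
        · subst h; exact (haA hu).elim
      have hUnion : Set.Iio a = ⋃ k : ℕ, Set.Iic (a - 1/(k+1)) := by
        ext v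
        simp only [Set.mem_Iio, Set.mem_iUnion, Set.mem_Iic]
        constructor
        · intro hv
          obtain ⟨k, hk⟩ := exists_nat_one_div_lt (sub_pos.mpr hv)
          exact ⟨k, by linarith⟩
        · rintro ⟨k, hk⟩
          have : (0:ℝ) < 1/(k+1) := by positivity
          linarith
      have hmem : ∀ k : ℕ, a - 1/(k+1) ∈ A := by
        intro k
        have h : (0:ℝ) < 1/(k+1) := by positivity
        obtain ⟨u, huA, hu⟩ := exists_lt_of_lt_csSup hAne (by linarith : a - 1/(k+1) < a)
        exact hlow u huA _ (le_of_lt hu)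
      calc μ A ≤ μ (Set.Iio a) := measure_mono hsub
        _ = ⨆ k : ℕ, μ (Set.Iic (a - 1/(k+1))) := by
            rw [hUnion]
            exact Directed.measure_iUnion (directed_of_isDirected_le
              (fun i j hij => Set.Iic_subset_Iic.mpr (by
                have hji : (i:ℝ) ≤ (j:ℝ) := Nat.cast_le.mpr hij
                have : (1:ℝ)/(j+1) ≤ 1/(i+1) := by
                  apply one_div_le_one_div_of_le (by positivity)
                  linarith
                linarith)))
        _ ≤ ENNReal.ofReal (c - s) := iSup_le fun k => hpt _ (hmem k)
  · -- A unbounded above : A = univ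
    have hAuniv : A = Set.univ := by
      ext u; simp only [Set.mem_univ, iff_true]
      obtain ⟨v, hvA, hv⟩ := not_bddAbove_iff.mp hbdd u
      exact hlow v hvA u (le_of_lt hv)
    rw [hAuniv]
    have := tendsto_measure_Iic_atTop μ
    refine le_of_tendsto this (Filter.Eventually.of_forall fun u => ?_)
    exact hpt u (hAuniv ▸ Set.mem_univ u)

lemma key_lemma (μ : Measure ℝ) [IsFiniteMeasure μ] (n : ℕ) :
    ∫ u, (μ (Set.Ioi u)).toReal ^ n ∂μ ≤
      (μ Set.univ).toReal ^ (n + 1) / (n + 1) := by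
  set c := (μ Set.univ).toReal with hc
  have hc0 : 0 ≤ c := ENNReal.toReal_nonneg
  set T : ℝ → ℝ := fun u => (μ (Set.Ioi u)).toReal with hT
  have hT_anti : Antitone T := by
    intro u v huv
    exact (ENNReal.toReal_le_toReal (measure_ne_top μ _) (measure_ne_top μ _)).mpr
      (measure_mono (Set.Ioi_subset_Ioi huv))
  have hT_meas : Measurable T := hT_anti.measurable
  have hT_nn : ∀ u, 0 ≤ T u := fun u => ENNReal.toReal_nonneg
  have hT_le : ∀ u, T u ≤ c := fun u =>
    (ENNReal.toReal_le_toReal (measure_ne_top μ _) (measure_ne_top μ _)).mpr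
      (measure_mono (Set.subset_univ _))
  match n with
  | 0 =>
    simp only [pow_zero, pow_one]
    rw [integral_const, smul_eq_mul, mul_one]
    simp [hc, measureReal_def]
  | (k+1) =>
    -- layer cake
    have hlc := lintegral_comp_eq_lintegral_meas_lt_mul μ
      (f := T) (g := fun t => (k+1) * t ^ k)
      (Filter.Eventually.of_forall hT_nn) hT_meas.aemeasurable
      (fun t _ => (Continuous.intervalIntegrable (by fun_prop) 0 t))
      (ae_restrict_of_forall_mem measurableSet_Ioi ?gnn)
    case gnn =>
      intro t ht
      have : (0:ℝ) < t := ht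
      positivity
    -- rewrite the integrand: ∫ t in 0..T u, (k+1) t^k = T u ^ (k+1)
    have hG : ∀ u : ℝ, (∫ t in (0:ℝ)..(T u), (k+1) * t ^ k) = T u ^ (k+1) := by
      intro u
      rw [intervalIntegral.integral_const_mul, integral_pow]
      field_simp
      simp
    have hbound : ∫⁻ t in Set.Ioi (0:ℝ), μ {a | t < T a} * ENNReal.ofReal ((k+1) * t^k)
        ≤ ENNReal.ofReal (c ^ (k+2) / (k+2)) := by
      set g : ℝ → ℝ≥0∞ := fun t => ENNReal.ofReal (c - t) * ENNReal.ofReal ((k+1) * t^k) with hg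
      have h1 : ∫⁻ t in Set.Ioi (0:ℝ), μ {a | t < T a} * ENNReal.ofReal ((k+1) * t^k)
          ≤ ∫⁻ t in Set.Ioi (0:ℝ), g t := by
        refine lintegral_mono_ae (ae_restrict_of_forall_mem measurableSet_Ioi ?_)
        intro t ht
        exact mul_le_mul_left (tail_bound μ t (le_of_lt ht)) _
      have h2 : ∫⁻ t in Set.Ioi (0:ℝ), g t
          = (∫⁻ t in Set.Ioc (0:ℝ) c, g t) + ∫⁻ t in Set.Ioi c, g t := by
        rw [← Set.Ioc_union_Ioi_eq_Ioi hc0,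
          lintegral_union measurableSet_Ioi (Set.Ioc_disjoint_Ioi le_rfl)]
      have h3 : ∫⁻ t in Set.Ioi c, g t = 0 := by
        refine le_antisymm ?_ (zero_le)
        have : ∫⁻ t in Set.Ioi c, g t ≤ ∫⁻ _ in Set.Ioi c, (0:ℝ≥0∞) := by
          refine lintegral_mono_ae (ae_restrict_of_forall_mem measurableSet_Ioi ?_)
          intro t ht
          have : ENNReal.ofReal (c - t) = 0 := by
            rw [ENNReal.ofReal_eq_zero]; linarith [Set.mem_Ioi.mp ht]
          simp [hg, this]
        simpa using this
      have h4 : ∫⁻ t in Set.Ioc (0:ℝ) c, g t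
          = ENNReal.ofReal (∫ t in Set.Ioc (0:ℝ) c, (c - t) * ((k+1) * t^k)) := by
        rw [show (∫⁻ t in Set.Ioc (0:ℝ) c, g t)
            = ∫⁻ t in Set.Ioc (0:ℝ) c, ENNReal.ofReal ((c - t) * ((k+1) * t^k)) from ?_]
        · rw [← ofReal_integral_eq_lintegral_ofReal]
          · exact (Continuous.integrableOn_Ioc (by fun_prop))
          · refine ae_restrict_of_forall_mem measurableSet_Ioc ?_
            intro t ht
            have h := ht.1; have h' := ht.2
            have : (0:ℝ) ≤ c - t := by linarith
            positivity
        · refine setLIntegral_congr_fun measurableSet_Ioc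
            (fun t ht => ?_)
          rw [hg, ENNReal.ofReal_mul (by linarith [ht.2] : (0:ℝ) ≤ c - t)]
      have h5 : (∫ t in Set.Ioc (0:ℝ) c, (c - t) * ((k+1) * t^k)) = c ^ (k+2) / (k+2) := by
        rw [← intervalIntegral.integral_of_le hc0]
        have hrw : ∀ t : ℝ, (c - t) * ((k+1) * t^k)
            = ((k+1) * c) * t^k - (k+1) * t^(k+1) := by intro t; ring
        simp_rw [hrw]
        rw [intervalIntegral.integral_sub ((Continuous.intervalIntegrable (by fun_prop) 0 c))
            ((Continuous.intervalIntegrable (by fun_prop) 0 c)),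
          intervalIntegral.integral_const_mul, intervalIntegral.integral_const_mul,
          integral_pow, integral_pow]
        have hk1 : ((k:ℝ)+1) ≠ 0 := by positivity
        have hk2 : ((k:ℝ)+2) ≠ 0 := by positivity
        push_cast
        field_simp
        ring
      exact le_trans h1 (le_of_eq (by rw [h2, h3, add_zero, h4, h5]))
    -- now convert to real
    have hint_eq : ∫ u, T u ^ (k+1) ∂μ
        = (∫⁻ u, ENNReal.ofReal (T u ^ (k+1)) ∂μ).toReal := by
      rw [integral_eq_lintegral_of_nonneg_ae
        (Filter.Eventually.of_forall fun u => by positivity)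
        ((hT_meas.pow_const _).aestronglyMeasurable)]
    have hlhs : ∫⁻ u, ENNReal.ofReal (T u ^ (k+1)) ∂μ
        = ∫⁻ t in Set.Ioi 0, μ {a | t < T a} * ENNReal.ofReal ((k+1) * t^k) := by
      rw [← hlc]
      exact lintegral_congr fun u => by rw [hG u]
    rw [hint_eq, hlhs]
    refine le_trans (ENNReal.toReal_le_of_le_ofReal (by positivity) hbound) ?_
    apply le_of_eq
    push_cast
    ring_nf


lemma iterW_nonneg (m : Measure ℝ) (W : ℝ → ℝ → ℝ) (hWnn : ∀ x y, 0 ≤ W x y) :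
    ∀ n x y, 0 ≤ iterW m W n x y
  | 0, x, y => hWnn x y
  | (n+1), x, y => by
    simp only [iterW, otimes]
    exact integral_nonneg fun u => mul_nonneg (hWnn _ _) (iterW_nonneg m W hWnn n u y)

lemma aux_bound (m : Measure ℝ) (W : ℝ → ℝ → ℝ)
    (hWmeas : Measurable (Function.uncurry W))
    (hWnn : ∀ x y, 0 ≤ W x y)
    (hWmono : ∀ x x' y : ℝ, x ≤ x' → x' ≤ y → W x' y ≤ W x y)
    (x y : ℝ) (hint : IntegrableOn (fun u => W x u) (Set.Ioo x y) m) :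
    ∀ n : ℕ, ∀ x' : ℝ, x ≤ x' → x' ≤ y →
      iterW m W n x' y ≤
        W x' y * (∫ u in Set.Ioo x' y, W x u ∂m) ^ n / (Nat.factorial n : ℝ) := by
  have hWx_meas : Measurable (fun u => W x u) :=
    hWmeas.comp (measurable_const.prodMk measurable_id)
  intro n
  induction n with
  | zero =>
    intro x' hxx' hx'y
    simp [iterW]
  | succ n ih =>
    intro x' hxx' hx'y
    set S := Set.Ioo x' y with hS
    have hSsub : S ⊆ Set.Ioo x y := Set.Ioo_subset_Ioo hxx' le_rfl
    have hint' : IntegrableOn (fun u => W x u) S m := hint.mono_set hSsub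
    set f : ℝ → ℝ≥0 := fun t => (W x t).toNNReal with hf
    have hf_meas : Measurable f := hWx_meas.real_toNNReal
    set μ : Measure ℝ := (m.restrict S).withDensity (fun t => (f t : ℝ≥0∞)) with hμ
    -- μ of sets
    have hμ_set : ∀ s : Set ℝ, MeasurableSet s →
        μ s = ∫⁻ t in s ∩ S, ENNReal.ofReal (W x t) ∂m := by
      intro s hs
      rw [hμ, withDensity_apply _ hs, Measure.restrict_restrict hs]
      rfl
    have hμ_int : ∀ s : Set ℝ, MeasurableSet s →
        IntegrableOn (fun u => W x u) (s ∩ S) m ∧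
        μ s = ENNReal.ofReal (∫ t in s ∩ S, W x t ∂m) := by
      intro s hs
      have hsub : s ∩ S ⊆ Set.Ioo x y := (Set.inter_subset_right).trans hSsub
      have hi : IntegrableOn (fun u => W x u) (s ∩ S) m := hint.mono_set hsub
      refine ⟨hi, ?_⟩
      rw [hμ_set s hs, ← ofReal_integral_eq_lintegral_ofReal hi
        (ae_restrict_of_forall_mem (hs.inter measurableSet_Ioo)
          (fun t _ => hWnn x t))]
    -- total mass
    have hμ_univ : μ Set.univ = ENNReal.ofReal (∫ t in S, W x t ∂m) := by
      have := (hμ_int Set.univ MeasurableSet.univ).2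
      simpa using this
    have hfin : IsFiniteMeasure μ := by
      constructor
      rw [hμ_univ]; exact ENNReal.ofReal_lt_top
    set C := ∫ u in S, W x u ∂m with hC
    have hC0 : 0 ≤ C := setIntegral_nonneg measurableSet_Ioo fun u _ => hWnn x u
    have hμC : (μ Set.univ).toReal = C := by rw [hμ_univ, ENNReal.toReal_ofReal hC0]
    set T : ℝ → ℝ := fun u => (μ (Set.Ioi u)).toReal with hT
    have hT_ioo : ∀ u : ℝ, x' ≤ u → T u = ∫ t in Set.Ioo u y, W x t ∂m := by
      intro u hu
      have hset : Set.Ioi u ∩ S = Set.Ioo u y := by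
        ext t
        simp only [Set.mem_inter_iff, Set.mem_Ioi, Set.mem_Ioo, hS]
        constructor
        · rintro ⟨h1, _, h3⟩; exact ⟨h1, h3⟩
        · rintro ⟨h1, h2⟩; exact ⟨h1, lt_of_le_of_lt hu h1, h2⟩
      have h2 := (hμ_int (Set.Ioi u) measurableSet_Ioi).2
      rw [hset] at h2
      simp only [hT]
      rw [h2, ENNReal.toReal_ofReal]
      exact setIntegral_nonneg measurableSet_Ioo fun t _ => hWnn x t
    haveI := hfin
    have hT_anti : Antitone T := by
      intro u v huv
      exact (ENNReal.toReal_le_toReal (measure_ne_top μ _) (measure_ne_top μ _)).mpr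
        (measure_mono (Set.Ioi_subset_Ioi huv))
    have hT_meas : Measurable T := hT_anti.measurable
    have hT_nn : ∀ u, 0 ≤ T u := fun u => ENNReal.toReal_nonneg
    have hT_leC : ∀ u, T u ≤ C := fun u => hμC ▸
      ((ENNReal.toReal_le_toReal (measure_ne_top μ _) (measure_ne_top μ _)).mpr
        (measure_mono (Set.subset_univ _)))
    set F : ℝ := (Nat.factorial n : ℝ) with hF
    have hF0 : 0 < F := by
      rw [hF]; exact_mod_cast Nat.factorial_pos n
    have hpt : ∀ u ∈ S, W x' u * iterW m W n u y
        ≤ W x u * (W x' y * T u ^ n) / F := by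
      intro u hu
      obtain ⟨hu1, hu2⟩ := hu
      have hih := ih u (le_trans hxx' hu1.le) hu2.le
      rw [← hT_ioo u hu1.le] at hih
      calc W x' u * iterW m W n u y
          ≤ W x' u * (W u y * T u ^ n / F) :=
            mul_le_mul_of_nonneg_left hih (hWnn _ _)
        _ = W x' u * (W u y * T u ^ n) / F := by ring
        _ ≤ W x u * (W x' y * T u ^ n) / F := by
            have h1 : W x' u ≤ W x u := hWmono x x' u hxx' hu1.le
            have h2 : W u y ≤ W x' y := hWmono x' u y hu1.le hu2.le
            have h3 : (0:ℝ) ≤ T u ^ n := pow_nonneg (hT_nn u) n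
            have h4 : W x' u * (W u y * T u ^ n) ≤ W x u * (W x' y * T u ^ n) :=
              mul_le_mul h1 (mul_le_mul_of_nonneg_right h2 h3)
                (mul_nonneg (hWnn _ _) h3) (hWnn _ _)
            exact (div_le_div_iff_of_pos_right hF0).mpr h4
    have hg_int : IntegrableOn (fun u => W x u * (W x' y * T u ^ n) / F) S m := by
      have h1 : IntegrableOn (fun u => (W x' y * T u ^ n / F) * W x u) S m := by
        apply Integrable.bdd_mul (f := fun u => W x' y * T u ^ n / F) (c := W x' y * C ^ n / F) hint'
          ((measurable_const.mul (hT_meas.pow_const n)).div_const F).aestronglyMeasurable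
        refine Filter.Eventually.of_forall fun u => ?_
        rw [Real.norm_eq_abs, abs_of_nonneg (div_nonneg
          (mul_nonneg (hWnn _ _) (pow_nonneg (hT_nn u) n)) hF0.le)]
        exact (div_le_div_iff_of_pos_right hF0).mpr
          (mul_le_mul_of_nonneg_left (pow_le_pow_left₀ (hT_nn u) (hT_leC u) n) (hWnn _ _))
      exact h1.congr (Filter.Eventually.of_forall fun u => by ring)
    have step1 : iterW m W (n+1) x' y
        ≤ ∫ u in S, W x u * (W x' y * T u ^ n) / F ∂m := by
      have heq : iterW m W (n+1) x' y = ∫ u in S, W x' u * iterW m W n u y ∂m := by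
        simp only [iterW, otimes, hS]
      rw [heq]
      exact integral_mono_of_nonneg
        (ae_restrict_of_forall_mem measurableSet_Ioo
          (fun u _ => mul_nonneg (hWnn _ _) (iterW_nonneg m W hWnn n u y)))
        hg_int
        (ae_restrict_of_forall_mem measurableSet_Ioo hpt)
    have step2 : ∫ u in S, W x u * (W x' y * T u ^ n) / F ∂m
        = (W x' y / F) * ∫ u in S, T u ^ n * W x u ∂m := by
      rw [← integral_const_mul]
      exact integral_congr_ae (Filter.Eventually.of_forall fun u => by ring)
    have step3 : ∫ u in S, T u ^ n * W x u ∂m = ∫ u, T u ^ n ∂μ := by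
      rw [hμ, integral_withDensity_eq_integral_smul hf_meas]
      refine integral_congr_ae (Filter.Eventually.of_forall fun u => ?_)
      simp only [hf, NNReal.smul_def, Real.coe_toNNReal _ (hWnn x u)]
      rw [smul_eq_mul, mul_comm]
    have hkey := key_lemma μ n
    rw [hμC] at hkey
    calc iterW m W (n+1) x' y
        ≤ (W x' y / F) * ∫ u, T u ^ n ∂μ := by
          rw [← step3, ← step2]; exact step1
      _ ≤ (W x' y / F) * (C ^ (n+1) / (n+1)) := by
          exact mul_le_mul_of_nonneg_left hkey (div_nonneg (hWnn _ _) hF0.le)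
      _ = W x' y * C ^ (n+1) / (Nat.factorial (n+1) : ℝ) := by
          have hfact : (Nat.factorial (n+1) : ℝ) = (↑n + 1) * F := by
            rw [hF]; push_cast [Nat.factorial_succ]; ring
          rw [hfact]
          rw [div_mul_div_comm, mul_comm F (↑n + 1)]

theorem stmt0 (I : Set ℝ) (m : Measure ℝ) (W : ℝ → ℝ → ℝ)
    (hWmeas : Measurable (Function.uncurry W))
    (hWnn : ∀ x y, 0 ≤ W x y)
    (hWvanish : ∀ x y : ℝ, y < x → W x y = 0)
    (hWmono : ∀ x x' y : ℝ, x ≤ x' → x' ≤ y → W x' y ≤ W x y)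
    (hWint : ∀ x y : ℝ, x ∈ I → y ∈ I → x < y →
      IntegrableOn (fun u => W x u) (Set.Ioo x y) m)
    (n : ℕ) (hn : 1 ≤ n) (x y : ℝ) (hx : x ∈ I) (hy : y ∈ I) (hxy : x ≤ y) :
    iterW m W (n - 1) x y ≤
      W x y * (∫ u in Set.Ioo x y, W x u ∂m) ^ (n - 1) / (Nat.factorial (n - 1) : ℝ) := by
  have hint : IntegrableOn (fun u => W x u) (Set.Ioo x y) m := by
    rcases lt_or_eq_of_le hxy with h | h
    · exact hWint x y hx hy h
    · rw [← h, Set.Ioo_self]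
      exact integrableOn_empty
  exact aux_bound m W hWmeas hWnn hWmono x y hint (n-1) x le_rfl hxy
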